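/- For every permutation σ of {1,2} and every non-negative integer n, F_σ(n) ∩ F_{σ̄}(1) = {0}. -/

import Mathlib

open Submodule

/-- For a permutation `σ` of `{1,2}`, the increasing sequence of subspaces `F_σ(n)`:
`F_σ(0) = ⊥`, `F_σ(n+1) = Σ_i (F_σ(n) + Vᵢ) ⊓ (F_σ(n) + W_{σ(i)})`. -/
noncomputable def Fsig {K E : Type*} [Field K] [AddCommGroup E] [Module K E]
    (V W : Fin 2 → Submodule K E) (σ : Equiv.Perm (Fin 2)) : ℕ → Submodule K E
  | 0 => ⊥
  | n + 1 => ⨆ i : Fin 2, (Fsig V W σ n ⊔ V i) ⊓ (Fsig V W σ n ⊔ W (σ i))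

section Aux

variable {K E : Type*} [Field K] [AddCommGroup E] [Module K E]

/-- The involution which is `+1` on `p` and `-1` on `q`. -/
noncomputable def myInvol (p q : Submodule K E) (h : IsCompl p q) : Module.End K E :=
  (2 : K) • (p.subtype ∘ₗ p.linearProjOfIsCompl q h) - 1

lemma myInvol_left {p q : Submodule K E} (h : IsCompl p q) {x : E} (hx : x ∈ p) :
    myInvol p q h x = x := by
  have h1 : (p.linearProjOfIsCompl q h) x = ⟨x, hx⟩ :=
    Submodule.linearProjOfIsCompl_apply_left h ⟨x, hx⟩
  simp only [myInvol, LinearMap.sub_apply, LinearMap.smul_apply, LinearMap.coe_comp,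
    Function.comp_apply, Module.End.one_apply, h1, Submodule.coe_subtype]
  rw [two_smul]
  abel

lemma myInvol_right {p q : Submodule K E} (h : IsCompl p q) {x : E} (hx : x ∈ q) :
    myInvol p q h x = -x := by
  have h1 : (p.linearProjOfIsCompl q h) x = 0 :=
    Submodule.linearProjOfIsCompl_apply_right' h hx
  simp only [myInvol, LinearMap.sub_apply, LinearMap.smul_apply, LinearMap.coe_comp,
    Function.comp_apply, Module.End.one_apply, h1, map_zero, smul_zero]
  abel

lemma myInvol_invol {p q : Submodule K E} (h : IsCompl p q) (x : E) :
    myInvol p q h (myInvol p q h x) = x := by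
  have hx : x ∈ p ⊔ q := by rw [h.sup_eq_top]; trivial
  obtain ⟨a, ha, b, hb, hab⟩ := Submodule.mem_sup.mp hx
  subst hab
  rw [map_add, myInvol_left h ha, myInvol_right h hb, map_add, myInvol_left h ha,
    map_neg, myInvol_right h hb, neg_neg]

/-- `(u-1)^m` commutes with `u` (pointwise). -/
lemma gpow_u (u : Module.End K E) : ∀ (m : ℕ) (x : E),
    ((u - 1) ^ m) (u x) = u (((u - 1) ^ m) x) := by
  intro m
  induction m with
  | zero => intro x; simp
  | succ m ih =>
    intro x
    have hgu : (u - 1) (u x) = u ((u - 1) x) := by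
      simp only [LinearMap.sub_apply, Module.End.one_apply, map_sub]
    rw [pow_succ, Module.End.mul_apply, Module.End.mul_apply, hgu, ih]

/-- The kernel of `(st-1)^m` is invariant under `s`, when `s, t` are involutions. -/
lemma gpow_s_invariant (s t : Module.End K E) (hs2 : ∀ x, s (s x) = x)
    (ht2 : ∀ x, t (t x) = x) : ∀ (m : ℕ) (x : E),
    ((s * t - 1) ^ m) x = 0 → ((s * t - 1) ^ m) (s x) = 0 := by
  have hgapp : ∀ y : E, (s * t - 1) y = s (t y) - y := by
    intro y
    simp only [LinearMap.sub_apply, Module.End.mul_apply, Module.End.one_apply]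
  have hgw : ∀ y : E, (s * t - 1) (t (s y)) = t (s ((s * t - 1) y)) := by
    intro y
    simp only [hgapp, map_sub, ht2, hs2]
  have hgw_pow : ∀ (m : ℕ) (y : E),
      ((s * t - 1) ^ m) (t (s y)) = t (s (((s * t - 1) ^ m) y)) := by
    intro m
    induction m with
    | zero => intro y; simp
    | succ m ih =>
      intro y
      rw [pow_succ, Module.End.mul_apply, Module.End.mul_apply, hgw, ih]
  have hgs : ∀ y : E, (s * t - 1) (s y) = -(s (t (s ((s * t - 1) y)))) := by
    intro y
    simp only [hgapp, map_sub, map_neg, ht2, hs2, neg_sub]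
  intro m
  induction m with
  | zero =>
    intro x hx
    simp only [pow_zero, Module.End.one_apply] at hx ⊢
    rw [hx, map_zero]
  | succ m ih =>
    intro x hx
    have h1 : ((s * t - 1) ^ m) ((s * t - 1) x) = 0 := by
      rw [← Module.End.mul_apply, ← pow_succ]; exact hx
    have h2 : ((s * t - 1) ^ m) (t (s ((s * t - 1) x))) = 0 := by
      rw [hgw_pow, h1, map_zero, map_zero]
    have h3 := ih _ h2
    rw [pow_succ, Module.End.mul_apply, hgs, map_neg, h3, neg_zero]

end Aux

/-- For every permutation `σ` of `{1,2}` (with `σ̄` the other permutation)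
and every `n`, `F_σ(n) ∩ F_σ̄(1) = {0}`. -/
theorem stmt7 {K E : Type*} [Field K] [AddCommGroup E] [Module K E]
    [FiniteDimensional K E] (hchar : (2 : K) ≠ 0)
    (V W : Fin 2 → Submodule K E)
    (hV : IsCompl (V 0) (V 1)) (hW : IsCompl (W 0) (W 1)) :
    ∀ σ σ' : Equiv.Perm (Fin 2), σ ≠ σ' →
      ∀ n : ℕ, Fsig V W σ n ⊓ Fsig V W σ' 1 = ⊥ := by
  intro σ σ' hne n
  have key : ∀ a b : Equiv.Perm (Fin 2), a ≠ b → b 0 = a 1 ∧ b 1 = a 0 := by decide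
  obtain ⟨hσ'0, hσ'1⟩ := key σ σ' hne
  have hWσ : IsCompl (W (σ 0)) (W (σ 1)) := by
    have hcase : ∀ a : Equiv.Perm (Fin 2), (a 0 = 0 ∧ a 1 = 1) ∨ (a 0 = 1 ∧ a 1 = 0) := by
      decide
    rcases hcase σ with ⟨h0, h1⟩ | ⟨h0, h1⟩
    · rw [h0, h1]; exact hW
    · rw [h0, h1]; exact hW.symm
  set s : Module.End K E := myInvol (V 0) (V 1) hV with hs_def
  set t : Module.End K E := myInvol (W (σ 0)) (W (σ 1)) hWσ with ht_def
  have hs2 : ∀ x, s (s x) = x := myInvol_invol hV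
  have ht2 : ∀ x, t (t x) = x := myInvol_invol hWσ
  have hsV : ∀ i : Fin 2, ∀ v ∈ V i, s v = (if i = 0 then (1 : K) else -1) • v := by
    intro i v hv
    have hi : i = 0 ∨ i = 1 := by omega
    rcases hi with rfl | rfl
    · simpa using myInvol_left hV hv
    · rw [if_neg (by norm_num : ¬ ((1 : Fin 2) = 0)), neg_smul, one_smul]
      exact myInvol_right hV hv
  have htW : ∀ i : Fin 2, ∀ w ∈ W (σ i), t w = (if i = 0 then (1 : K) else -1) • w := by
    intro i w hw
    have hi : i = 0 ∨ i = 1 := by omega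
    rcases hi with rfl | rfl
    · simpa using myInvol_left hWσ hw
    · rw [if_neg (by norm_num : ¬ ((1 : Fin 2) = 0)), neg_smul, one_smul]
      exact myInvol_right hWσ hw
  -- main induction: F_σ(n) is inside the generalized eigenspace of s*t at 1
  have hind : ∀ n : ℕ, ∃ m : ℕ, ∀ x ∈ Fsig V W σ n, (((s * t) - 1) ^ m) x = 0 := by
    intro n
    induction n with
    | zero =>
      refine ⟨0, ?_⟩
      intro x hx
      have hx0 : x = 0 := by simpa [Fsig] using hx
      simp [hx0]
    | succ n ih =>
      obtain ⟨m, hm⟩ := ih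
      refine ⟨m + 1, ?_⟩
      have hle : ∀ i : Fin 2,
          (Fsig V W σ n ⊔ V i) ⊓ (Fsig V W σ n ⊔ W (σ i)) ≤
            LinearMap.ker (((s * t) - 1) ^ (m + 1)) := by
        intro i x hx
        obtain ⟨f, hf, v, hv, hfv⟩ := Submodule.mem_sup.mp hx.1
        obtain ⟨f', hf', w, hw, hfw⟩ := Submodule.mem_sup.mp hx.2
        set ε : K := if i = 0 then 1 else -1 with hε
        have hε2 : ε * ε = 1 := by rw [hε]; split_ifs <;> norm_num
        have hsv : s v = ε • v := hsV i v hv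
        have htw : t w = ε • w := htW i w hw
        have hv' : v = x - f := by rw [← hfv]; abel
        have hw' : w = x - f' := by rw [← hfw]; abel
        have hsx : s x = s f + (ε • x - ε • f) := by
          conv_lhs => rw [← hfv]
          rw [map_add, hsv, hv', smul_sub]
        have htx : t x = t f' + (ε • x - ε • f') := by
          conv_lhs => rw [← hfw]
          rw [map_add, htw, hw', smul_sub]
        have hgx : ((s * t) - 1) x = (s * t) f' + ε • (s f) - f - ε • (s f') := by
          have h0 : ((s * t) - 1) x = s (t x) - x := by
            simp only [LinearMap.sub_apply, Module.End.mul_apply, Module.End.one_apply]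
          have h0' : (s * t) f' = s (t f') := by
            simp only [Module.End.mul_apply]
          rw [h0, h0', htx, map_add, map_sub, map_smul, map_smul, hsx, smul_add, smul_sub,
            smul_smul, smul_smul, hε2, one_smul, one_smul]
          abel
        have h1 : (((s * t) - 1) ^ m) (((s * t) - 1) x) = 0 := by
          rw [hgx, map_sub, map_sub, map_add, map_smul, map_smul,
            gpow_u (s * t) m f', hm f' hf', map_zero, hm f hf,
            gpow_s_invariant s t hs2 ht2 m f (hm f hf),
            gpow_s_invariant s t hs2 ht2 m f' (hm f' hf')]
          simp
        rw [LinearMap.mem_ker, pow_succ, Module.End.mul_apply]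
        exact h1
      intro x hx
      have hx' : x ∈ ⨆ i : Fin 2, (Fsig V W σ n ⊔ V i) ⊓ (Fsig V W σ n ⊔ W (σ i)) := hx
      exact (iSup_le hle) hx'
  -- F_σ'(1) is in the eigenspace of s*t at -1
  have hEig : ∀ x ∈ Fsig V W σ' 1, (s * t) x = -x := by
    have hle : ∀ i : Fin 2,
        (Fsig V W σ' 0 ⊔ V i) ⊓ (Fsig V W σ' 0 ⊔ W (σ' i)) ≤
          LinearMap.ker ((s * t) + 1) := by
      intro i x hx
      have hbot : Fsig V W σ' 0 = ⊥ := rfl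
      have hx1 : x ∈ V i := by
        have h := hx.1; rw [hbot, bot_sup_eq] at h; exact h
      have hx2 : x ∈ W (σ' i) := by
        have h := hx.2; rw [hbot, bot_sup_eq] at h; exact h
      have hux : (s * t) x = -x := by
        have hi : i = 0 ∨ i = 1 := by omega
        rcases hi with rfl | rfl
        · rw [hσ'0] at hx2
          have htx : t x = -x := myInvol_right hWσ hx2
          have hh : s (t x) = -x := by rw [htx, map_neg, myInvol_left hV hx1]
          simpa only [Module.End.mul_apply] using hh
        · rw [hσ'1] at hx2
          have htx : t x = x := myInvol_left hWσ hx2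
          have hh : s (t x) = -x := by rw [htx, myInvol_right hV hx1]
          simpa only [Module.End.mul_apply] using hh
      rw [LinearMap.mem_ker, LinearMap.add_apply, Module.End.one_apply, hux, neg_add_cancel]
    intro x hx
    have hx' : x ∈ ⨆ i : Fin 2, (Fsig V W σ' 0 ⊔ V i) ⊓ (Fsig V W σ' 0 ⊔ W (σ' i)) := hx
    have h := (iSup_le hle) hx'
    rw [LinearMap.mem_ker, LinearMap.add_apply, Module.End.one_apply] at h
    exact eq_neg_of_add_eq_zero_left h
  -- conclude
  rw [eq_bot_iff]
  intro x hx
  obtain ⟨m, hm⟩ := hind n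
  have hx0 : (((s * t) - 1) ^ m) x = 0 := hm x hx.1
  have hux : (s * t) x = -x := hEig x hx.2
  have hgx : ((s * t) - 1) x = (-2 : K) • x := by
    have h0 : ((s * t) - 1) x = (s * t) x - x := by
      simp only [LinearMap.sub_apply, Module.End.one_apply]
    rw [h0, hux, neg_smul, two_smul]
    abel
  have hpow : ∀ k : ℕ, (((s * t) - 1) ^ k) x = ((-2 : K) ^ k) • x := by
    intro k
    induction k with
    | zero => simp
    | succ k ih =>
      rw [pow_succ, Module.End.mul_apply, hgx, map_smul, ih, smul_smul, pow_succ]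
      ring_nf
  rw [hpow m] at hx0
  rcases smul_eq_zero.mp hx0 with h | h
  · exact absurd h (pow_ne_zero m (neg_ne_zero.mpr hchar))
  · simpa using h
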